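/- Benefit formula for fixing an expressed opinion (the paper's equation (8)): let U ⊆ Fin n be a finite set, i ∉ U, Q = M_U⁻¹, Q' = M_{U∪{i}}⁻¹, and s : Fin n → ℝ. Define g i = ∑_j Q j i (the contribution index of node i after fixing U) and z i = ∑_k Q i k · s k (the equilibrium expressed opinion of node i after fixing U). Then ∑_j ∑_k (Q' j k - Q j k) · s k = (g i / Q i i) · (s i - z i). -/

import Mathlib

open Matrix

lemma sdd_det_ne_zero {n : ℕ} (A L : Matrix (Fin n) (Fin n) ℝ)
    (hL : L = Matrix.diagonal (fun i => ∑ j, |A i j|) - A)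
    (P : Fin n → Prop) [DecidablePred P] (B : Matrix (Fin n) (Fin n) ℝ)
    (hB : ∀ j k, B j k = if P j then (if j = k then 1 else 0) else (L + 1) j k) :
    B.det ≠ 0 := by
  apply det_ne_zero_of_sum_row_lt_diag
  intro k
  by_cases hk : P k
  · have h1 : ∑ j ∈ Finset.univ.erase k, ‖B k j‖ = 0 := by
      apply Finset.sum_eq_zero
      intro j hj
      have : k ≠ j := fun h => (Finset.mem_erase.mp hj).1 h.symm
      simp [hB, hk, this, Matrix.one_apply]
    rw [h1, hB, if_pos hk, if_pos rfl]
    norm_num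
  · have hdiag : B k k = (∑ j, |A k j|) - A k k + 1 := by
      simp [hB, hk, hL, Matrix.one_apply, Matrix.diagonal]
    have hoff : ∀ j, j ≠ k → ‖B k j‖ = |A k j| := by
      intro j hj
      have : k ≠ j := fun h => hj h.symm
      simp [hB, hk, hL, Matrix.one_apply, this, Matrix.diagonal_apply_ne _ this,
        Real.norm_eq_abs, abs_neg]
    have hsum : ∑ j ∈ Finset.univ.erase k, ‖B k j‖ = ∑ j ∈ Finset.univ.erase k, |A k j| := by
      apply Finset.sum_congr rfl
      intro j hj
      exact hoff j (Finset.mem_erase.mp hj).1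
    have herase : ∑ j ∈ Finset.univ.erase k, |A k j| = (∑ j, |A k j|) - |A k k| :=
      Finset.sum_erase_eq_sub (Finset.mem_univ k)
    have hBkk_pos : 0 < B k k := by
      rw [hdiag]
      have : A k k ≤ |A k k| := le_abs_self _
      have h2 : 0 ≤ (∑ j, |A k j|) - |A k k| := by
        rw [← herase]; positivity
      linarith
    rw [hsum, herase, Real.norm_eq_abs, abs_of_pos hBkk_pos, hdiag]
    have : A k k ≤ |A k k| := le_abs_self _
    linarith


/-- Benefit formula for fixing an expressed opinion (the paper's equation (8)):
with `Q = M_U⁻¹`, `Q' = M_{U ∪ {i}}⁻¹`, contribution index `g i = ∑_j Q j i`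
and equilibrium expressed opinion `z i = ∑_k Q i k * s k`, the increase of the
overall opinion obtained by additionally fixing node `i ∉ U` is
`1ᵀ(Q' - Q)s = (g i / Q i i) * (s i - z i)`. -/
theorem benefit_of_fixing_expressed_opinion
    (n : ℕ) (A : Matrix (Fin n) (Fin n) ℝ)
    (L : Matrix (Fin n) (Fin n) ℝ)
    (hL : L = Matrix.diagonal (fun i => ∑ j, |A i j|) - A)
    (U : Finset (Fin n)) (i : Fin n) (hi : i ∉ U)
    (M M' : Matrix (Fin n) (Fin n) ℝ)
    (hM : ∀ j k, M j k = if j ∈ U then (if j = k then 1 else 0) else (L + 1) j k)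
    (hM' : ∀ j k, M' j k =
      if j ∈ insert i U then (if j = k then 1 else 0) else (L + 1) j k)
    (Q Q' : Matrix (Fin n) (Fin n) ℝ)
    (hQ : Q = M⁻¹) (hQ' : Q' = M'⁻¹)
    (s : Fin n → ℝ) :
    ∑ j, ∑ k, (Q' j k - Q j k) * s k =
      ((∑ j, Q j i) / Q i i) * (s i - ∑ k, Q i k * s k) := by
  classical
  have hMdet : M.det ≠ 0 := sdd_det_ne_zero A L hL (· ∈ U) M hM
  have hM'det : M'.det ≠ 0 := sdd_det_ne_zero A L hL (· ∈ insert i U) M' hM'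
  have hupd : M' = M.updateRow i (Pi.single i 1) := by
    ext j k
    by_cases hj : j = i
    · subst hj
      rw [Matrix.updateRow_self, hM' j k, if_pos (Finset.mem_insert_self _ _)]
      by_cases h : j = k <;> simp [Pi.single_apply, h]
    · rw [Matrix.updateRow_ne hj, hM' j k, hM j k]
      simp only [Finset.mem_insert, hj, false_or]
  have hMQ : M * Q = 1 := by
    rw [hQ]; exact Matrix.mul_nonsing_inv M (isUnit_iff_ne_zero.mpr hMdet)
  have hQii : Q i i ≠ 0 := by
    rw [hQ, Matrix.inv_def]
    simp only [Matrix.smul_apply, Matrix.adjugate_apply, smul_eq_mul]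
    rw [← hupd, Ring.inverse_eq_inv']
    exact mul_ne_zero (inv_ne_zero hMdet) hM'det
  set t : Fin n → ℝ := fun k => (Q i k - if i = k then 1 else 0) / Q i i with ht
  have hN : M' * (Q + Matrix.of fun j k => -(Q j i * t k)) = 1 := by
    ext j k
    rw [Matrix.mul_apply]
    simp only [Matrix.add_apply, Matrix.of_apply]
    by_cases hj : j = i
    · subst hj
      have hrow : ∀ m, M' j m = if j = m then 1 else 0 := fun m => by
        rw [hM']; simp
      simp only [hrow, ite_mul, one_mul, zero_mul]
      rw [Finset.sum_ite_eq, if_pos (Finset.mem_univ j), Matrix.one_apply]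
      rcases eq_or_ne j k with h | h
      · subst h
        simp only [if_pos rfl, ht]
        field_simp
        simp only [↓reduceIte]
        ring
      · simp only [if_neg h, ht]
        field_simp
        ring
    · have hrow : ∀ m, M' j m = M j m := fun m => by
        rw [hupd, Matrix.updateRow_ne hj]
      simp only [hrow, mul_add, mul_neg, Finset.sum_add_distrib, Finset.sum_neg_distrib]
      have h1 : ∑ m, M j m * Q m k = (1 : Matrix (Fin n) (Fin n) ℝ) j k := by
        rw [← hMQ, Matrix.mul_apply]
      have h2 : ∑ m, M j m * (Q m i * t k) = (1 : Matrix (Fin n) (Fin n) ℝ) j i * t k := by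
        rw [← hMQ, Matrix.mul_apply, Finset.sum_mul]
        exact Finset.sum_congr rfl fun m _ => by ring
      rw [h1, h2, Matrix.one_apply_ne hj]
      ring
  have hQ'eq : Q' = Q + Matrix.of fun j k => -(Q j i * t k) := by
    rw [hQ', Matrix.inv_eq_right_inv hN]
  have htk : ∀ k, t k * Q i i = Q i k - if i = k then 1 else 0 := fun k => by
    simp only [ht]
    field_simp
  have hts : ∑ k, t k * s k = ((∑ k, Q i k * s k) - s i) / Q i i := by
    rw [eq_div_iff hQii, Finset.sum_mul]
    calc ∑ k, t k * s k * Q i i = ∑ k, (Q i k - if i = k then 1 else 0) * s k := by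
          refine Finset.sum_congr rfl fun k _ => ?_
          rw [← htk k]; ring
      _ = _ := by
          simp [sub_mul, Finset.sum_sub_distrib, ite_mul]
  calc ∑ j, ∑ k, (Q' j k - Q j k) * s k
      = ∑ j, Q j i * -∑ k, t k * s k := by
        refine Finset.sum_congr rfl fun j _ => ?_
        rw [mul_neg, Finset.mul_sum, ← Finset.sum_neg_distrib]
        refine Finset.sum_congr rfl fun k _ => ?_
        rw [hQ'eq]
        simp only [Matrix.add_apply, Matrix.of_apply]
        ring
    _ = (∑ j, Q j i) * -∑ k, t k * s k := by rw [Finset.sum_mul]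
    _ = ((∑ j, Q j i) / Q i i) * (s i - ∑ k, Q i k * s k) := by
        rw [hts]
        field_simp
        ring
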